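/- Weak duality for the entropy-regularized multi-marginal optimal transport problem: for every choice of entrywise positive dual vectors φ^k ∈ ℝ^{n_k} (k = 1,…,K) and every admissible transport plan Π ∈ Π(μ¹,…,μ^K), the Sinkhorn function value is bounded by the regularized primal objective, i.e. S(φ¹,…,φ^K) ≤ Σ_{i∈I} Π_i C_i + η Σ_{i∈I} Π_i (log Π_i − 1). -/

import Mathlib

lemma entropy_pointwise (t a : ℝ) (ht : 0 ≤ t) (ha : 0 < a) :
    t * Real.log a - a ≤ t * (Real.log t - 1) := by
  rcases eq_or_lt_of_le ht with h | h
  · simp [← h]; positivity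
  · have hlog := Real.log_le_sub_one_of_pos (div_pos ha h)
    rw [Real.log_div (ne_of_gt ha) (ne_of_gt h)] at hlog
    have := mul_le_mul_of_nonneg_left hlog ht
    have ht' : t * (a / t - 1) = a - t := by field_simp
    nlinarith

theorem weak_duality_entropy_regularized_MOT
    (K : ℕ) (n : Fin K → ℕ)
    (μ : ∀ k, Fin (n k) → ℝ)
    (hμ0 : ∀ k j, 0 ≤ μ k j) (hμ1 : ∀ k, ∑ j, μ k j = 1)
    (C : (∀ k, Fin (n k)) → ℝ) (hC : ∀ i, 0 ≤ C i)
    (η : ℝ) (hη : 0 < η)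
    (φ : ∀ k, Fin (n k) → ℝ) (hφ : ∀ k j, 0 < φ k j)
    (T : (∀ k, Fin (n k)) → ℝ)
    (hT0 : ∀ i, 0 ≤ T i)
    (hTmarg : ∀ (k : Fin K) (j : Fin (n k)),
      (∑ i : ∀ k, Fin (n k), if i k = j then T i else 0) = μ k j) :
    η * (∑ k, ∑ j, μ k j * Real.log (φ k j))
      - η * (∑ i : ∀ k, Fin (n k), Real.exp (-C i / η) * ∏ k, φ k (i k))
    ≤ (∑ i : ∀ k, Fin (n k), T i * C i)
      + η * (∑ i : ∀ k, Fin (n k), T i * (Real.log (T i) - 1)) := by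
  -- rewrite the dual entropy term as a sum over plans
  have hmarg : (∑ k, ∑ j, μ k j * Real.log (φ k j))
      = ∑ i : ∀ k, Fin (n k), T i * Real.log (∏ k, φ k (i k)) := by
    calc ∑ k, ∑ j, μ k j * Real.log (φ k j)
        = ∑ k, ∑ j, (∑ i : ∀ k, Fin (n k), if i k = j then T i else 0)
            * Real.log (φ k j) := by
          refine Finset.sum_congr rfl fun k _ => Finset.sum_congr rfl fun j _ => ?_
          rw [hTmarg]
      _ = ∑ k, ∑ i : ∀ k, Fin (n k), T i * Real.log (φ k (i k)) := by
          refine Finset.sum_congr rfl fun k _ => ?_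
          simp only [Finset.sum_mul, ite_mul, zero_mul]
          rw [Finset.sum_comm]
          refine Finset.sum_congr rfl fun i _ => ?_
          simp
      _ = ∑ i : ∀ k, Fin (n k), T i * Real.log (∏ k, φ k (i k)) := by
          rw [Finset.sum_comm]
          refine Finset.sum_congr rfl fun i _ => ?_
          rw [Real.log_prod (fun k _ => (hφ k (i k)).ne'), Finset.mul_sum]
  rw [hmarg, Finset.mul_sum, Finset.mul_sum, Finset.mul_sum, ← Finset.sum_sub_distrib,
    ← Finset.sum_add_distrib]
  refine Finset.sum_le_sum fun i _ => ?_
  have hΦ : 0 < ∏ k, φ k (i k) := Finset.prod_pos fun k _ => hφ k (i k)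
  have ha : 0 < Real.exp (-C i / η) * ∏ k, φ k (i k) := by positivity
  have key := entropy_pointwise (T i) _ (hT0 i) ha
  have hloga : Real.log (Real.exp (-C i / η) * ∏ k, φ k (i k))
      = -C i / η + Real.log (∏ k, φ k (i k)) := by
    rw [Real.log_mul (Real.exp_pos _).ne' hΦ.ne', Real.log_exp]
  rw [hloga] at key
  have := mul_le_mul_of_nonneg_left key hη.le
  have hexp : η * (T i * (-C i / η + Real.log (∏ k, φ k (i k))))
      = η * (T i * Real.log (∏ k, φ k (i k))) - T i * C i := by
    field_simp
    ring
  rw [mul_sub, hexp] at this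
  linarith
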